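/- Let ρ' = p_0|e_0⟩⟨e_0| + p_+|e_+⟩⟨e_+| + p_1|e_1⟩⟨e_1| be a mixture of three pairwise linearly independent (not necessarily orthogonal) unit vectors in ℂ³, with p_0,p_+,p_1 ≥ 0 summing to 1. Then the optimal probability P of unambiguously discriminating the three states satisfies P ≤ 1 − (2/3)(√(p_0 p_+)|⟨e_0|e_+⟩| + √(p_+ p_1)|⟨e_+|e_1⟩| + √(p_1 p_0)|⟨e_1|e_0⟩|). -/

import Mathlib

open ComplexOrder Matrix

def proj3 (v : Fin 3 → ℂ) : Matrix (Fin 3) (Fin 3) ℂ :=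
  Matrix.of fun i j => v i * star (v j)

def IsUnitVec3 (v : Fin 3 → ℂ) : Prop := ∑ j, Complex.normSq (v j) = 1

lemma dot_cs (u v : Fin 3 → ℂ) :
    ‖star u ⬝ᵥ v‖ ^ 2 ≤ (star u ⬝ᵥ u).re * (star v ⬝ᵥ v).re := by
  have h := @norm_inner_le_norm ℂ (EuclideanSpace ℂ (Fin 3)) _ _ _
    ((WithLp.equiv 2 _).symm u) ((WithLp.equiv 2 _).symm v)
  have hinner : ∀ x y : Fin 3 → ℂ, inner ℂ ((WithLp.equiv 2 _).symm x : EuclideanSpace ℂ (Fin 3))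
      ((WithLp.equiv 2 _).symm y) = star x ⬝ᵥ y := fun x y => by rw [dotProduct_comm]; rfl
  rw [hinner] at h
  have h1 : (star u ⬝ᵥ u).re = ‖(WithLp.equiv 2 _).symm u‖ ^ 2 := by
    rw [← @inner_self_eq_norm_sq ℂ, hinner]; rfl
  have h2 : (star v ⬝ᵥ v).re = ‖(WithLp.equiv 2 _).symm v‖ ^ 2 := by
    rw [← @inner_self_eq_norm_sq ℂ, hinner]; rfl
  rw [h1, h2]
  have := norm_nonneg (star u ⬝ᵥ v)
  nlinarith [norm_nonneg ((WithLp.equiv 2 _).symm u : EuclideanSpace ℂ (Fin 3)),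
    norm_nonneg ((WithLp.equiv 2 _).symm v : EuclideanSpace ℂ (Fin 3))]

lemma psd_cs {M : Matrix (Fin 3) (Fin 3) ℂ} (hM : M.PosSemidef) (x y : Fin 3 → ℂ) :
    ‖star x ⬝ᵥ M *ᵥ y‖ ^ 2 ≤ (star x ⬝ᵥ M *ᵥ x).re * (star y ⬝ᵥ M *ᵥ y).re := by
  open scoped MatrixOrder Matrix.Norms.L2Operator in
  obtain ⟨B, hB⟩ := CStarAlgebra.nonneg_iff_eq_star_mul_self.mp hM.nonneg
  rw [star_eq_conjTranspose] at hB
  subst hB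
  have key : ∀ a b : Fin 3 → ℂ, star a ⬝ᵥ (Bᴴ * B) *ᵥ b = star (B *ᵥ a) ⬝ᵥ (B *ᵥ b) := by
    intro a b
    rw [← Matrix.mulVec_mulVec, Matrix.star_mulVec, ← Matrix.dotProduct_mulVec]
  rw [key, key, key]
  exact dot_cs _ _

lemma trace_form (M : Matrix (Fin 3) (Fin 3) ℂ) (v : Fin 3 → ℂ) :
    (M * proj3 v).trace = star v ⬝ᵥ M *ᵥ v := by
  simp only [Matrix.trace, Matrix.diag, Matrix.mul_apply, proj3, Matrix.of_apply,
    dotProduct, Matrix.mulVec, Finset.mul_sum, Pi.star_apply]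
  exact Finset.sum_congr rfl fun i _ => Finset.sum_congr rfl fun j _ => by ring

lemma swap_form {M : Matrix (Fin 3) (Fin 3) ℂ} (hM : M.IsHermitian) (x y : Fin 3 → ℂ) :
    star y ⬝ᵥ M *ᵥ x = star (star x ⬝ᵥ M *ᵥ y) := by
  rw [star_dotProduct, star_mulVec, Matrix.dotProduct_mulVec, hM.eq]

lemma sqrt_amgm (a b : ℝ) (ha : 0 ≤ a) (hb : 0 ≤ b) :
    Real.sqrt a * Real.sqrt b ≤ (a + b) / 2 := by
  rw [← Real.sqrt_mul ha]
  have h1 : a * b ≤ ((a + b) / 2) ^ 2 := by nlinarith [sq_nonneg (a - b)]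
  calc Real.sqrt (a * b) ≤ Real.sqrt (((a + b) / 2) ^ 2) := Real.sqrt_le_sqrt h1
    _ = (a + b) / 2 := Real.sqrt_sq (by positivity)

theorem stmt17 (e : Fin 3 → (Fin 3 → ℂ)) (hunit : ∀ i, IsUnitVec3 (e i))
    (hpair : ∀ i j : Fin 3, i ≠ j → LinearIndependent ℂ ![e i, e j])
    (p : Fin 3 → ℝ) (hp : ∀ i, 0 ≤ p i) (hpsum : ∑ i, p i = 1)
    (E : Fin 3 → Matrix (Fin 3) (Fin 3) ℂ) (Einc : Matrix (Fin 3) (Fin 3) ℂ)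
    (hE : ∀ i, (E i).PosSemidef) (hEinc : Einc.PosSemidef)
    (hsum : (∑ i, E i) + Einc = (1 : Matrix (Fin 3) (Fin 3) ℂ))
    (hunamb : ∀ i j, i ≠ j → (E i * proj3 (e j)).trace = 0) :
    ∑ i, p i * ((E i * proj3 (e i)).trace).re
      ≤ 1 - (2/3) * (Real.sqrt (p 0 * p 1) * ‖star (e 0) ⬝ᵥ e 1‖
          + Real.sqrt (p 1 * p 2) * ‖star (e 1) ⬝ᵥ e 2‖
          + Real.sqrt (p 2 * p 0) * ‖star (e 2) ⬝ᵥ e 0‖) := by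
  set q : Fin 3 → ℝ := fun i => (star (e i) ⬝ᵥ Einc *ᵥ e i).re with hqdef
  have hq0 : ∀ i, 0 ≤ q i := by
    intro i
    have h2 := (Complex.le_def.mp (hEinc.dotProduct_mulVec_nonneg (e i))).1
    simpa only [Complex.zero_re] using h2
  have hEiz : ∀ i j, i ≠ j → ∀ x : Fin 3 → ℂ, star x ⬝ᵥ E i *ᵥ e j = 0 := by
    intro i j hij x
    have h0 : star (e j) ⬝ᵥ E i *ᵥ e j = 0 := by
      rw [← trace_form]; exact hunamb i j hij
    have hcs := psd_cs (hE i) x (e j)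
    rw [h0] at hcs
    simp only [Complex.zero_re, mul_zero] at hcs
    have hn : ‖star x ⬝ᵥ E i *ᵥ e j‖ = 0 := by
      nlinarith [norm_nonneg (star x ⬝ᵥ E i *ᵥ e j)]
    exact norm_eq_zero.mp hn
  have hEswap : ∀ i j, i ≠ j → ∀ x : Fin 3 → ℂ, star (e j) ⬝ᵥ E i *ᵥ x = 0 := by
    intro i j hij x
    rw [swap_form (hE i).1, hEiz i j hij x, star_zero]
  have happ : ∀ x y : Fin 3 → ℂ, star x ⬝ᵥ y =
      (∑ k, star x ⬝ᵥ E k *ᵥ y) + star x ⬝ᵥ Einc *ᵥ y := by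
    intro x y
    conv_lhs => rw [show y = ((∑ k, E k) + Einc) *ᵥ y by rw [hsum, Matrix.one_mulVec]]
    rw [Matrix.add_mulVec, dotProduct_add, Fin.sum_univ_three (f := fun k => E k),
      Matrix.add_mulVec, Matrix.add_mulVec, dotProduct_add, dotProduct_add,
      Fin.sum_univ_three (f := fun k => star x ⬝ᵥ E k *ᵥ y)]
  have hone : ∀ i, star (e i) ⬝ᵥ e i = (1 : ℂ) := by
    intro i
    have h := hunit i
    unfold IsUnitVec3 at h
    calc star (e i) ⬝ᵥ e i = ∑ j, (Complex.normSq (e i j) : ℂ) := by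
          simp only [dotProduct, Pi.star_apply]
          exact Finset.sum_congr rfl fun j _ => by
            rw [Complex.normSq_eq_conj_mul_self]; rfl
      _ = ((∑ j, Complex.normSq (e i j) : ℝ) : ℂ) := by push_cast; rfl
      _ = 1 := by rw [h]; norm_num
  have hc : ∀ i j, i ≠ j → star (e i) ⬝ᵥ e j = star (e i) ⬝ᵥ Einc *ᵥ e j := by
    intro i j hij
    have h := happ (e i) (e j)
    have z : (∑ k, star (e i) ⬝ᵥ E k *ᵥ e j) = 0 := by
      refine Finset.sum_eq_zero fun k _ => ?_
      by_cases hkj : k = j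
      · subst hkj
        exact hEswap k i (fun h' => hij h'.symm) (e k)
      · exact hEiz k j hkj (e i)
    rw [z, zero_add] at h
    exact h
  have hsucc : ∀ i, ((E i * proj3 (e i)).trace).re = 1 - q i := by
    intro i
    have h := happ (e i) (e i)
    rw [hone i] at h
    have z : (∑ k, star (e i) ⬝ᵥ E k *ᵥ e i) = star (e i) ⬝ᵥ E i *ᵥ e i :=
      Finset.sum_eq_single_of_mem i (Finset.mem_univ i)
        (fun k _ hk => hEiz k i hk (e i))
    rw [z] at h
    have hEq : star (e i) ⬝ᵥ E i *ᵥ e i = 1 - star (e i) ⬝ᵥ Einc *ᵥ e i := by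
      linear_combination -h
    rw [trace_form, hEq]
    simp [hqdef]
  have hcq : ∀ i j, i ≠ j → ‖star (e i) ⬝ᵥ e j‖ ≤ Real.sqrt (q i * q j) := by
    intro i j hij
    have hcs := psd_cs hEinc (e i) (e j)
    rw [← hc i j hij] at hcs
    have h2 : ‖star (e i) ⬝ᵥ e j‖ ^ 2 ≤ q i * q j := hcs
    have := Real.sqrt_le_sqrt h2
    rwa [Real.sqrt_sq (norm_nonneg _)] at this
  -- pair bounds
  have pair : ∀ i j, i ≠ j → Real.sqrt (p i * p j) * ‖star (e i) ⬝ᵥ e j‖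
      ≤ (p i * q i + p j * q j) / 2 := by
    intro i j hij
    have h1 : Real.sqrt (p i * p j) * ‖star (e i) ⬝ᵥ e j‖
        ≤ Real.sqrt (p i * p j) * Real.sqrt (q i * q j) :=
      mul_le_mul_of_nonneg_left (hcq i j hij) (Real.sqrt_nonneg _)
    have h2 : Real.sqrt (p i * p j) * Real.sqrt (q i * q j)
        = Real.sqrt (p i * q i) * Real.sqrt (p j * q j) := by
      rw [← Real.sqrt_mul (mul_nonneg (hp i) (hp j)),
        ← Real.sqrt_mul (mul_nonneg (hp i) (hq0 i))]
      ring_nf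
    have h3 := sqrt_amgm (p i * q i) (p j * q j)
      (mul_nonneg (hp i) (hq0 i)) (mul_nonneg (hp j) (hq0 j))
    linarith
  have p01 := pair 0 1 (by decide)
  have p12 := pair 1 2 (by decide)
  have p20 := pair 2 0 (by decide)
  have hS0 : 0 ≤ Real.sqrt (p 0 * p 1) * ‖star (e 0) ⬝ᵥ e 1‖
      + Real.sqrt (p 1 * p 2) * ‖star (e 1) ⬝ᵥ e 2‖
      + Real.sqrt (p 2 * p 0) * ‖star (e 2) ⬝ᵥ e 0‖ := by
    positivity
  rw [Fin.sum_univ_three, hsucc 0, hsucc 1, hsucc 2]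
  rw [Fin.sum_univ_three] at hpsum
  nlinarith [hq0 0, hq0 1, hq0 2, hp 0, hp 1, hp 2]
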